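/- Suppose R₀ ≤ 1. Let S, I : [0, ∞) → ℝ be differentiable functions solving the planar SIR system with S(0) > 0 and I(0) > 0. Then S(t) → A/μ and I(t) → 0 as t → ∞; that is, the disease-free equilibrium E₀ = (A/μ, 0) is globally asymptotically stable in the open positive quadrant. -/

import Mathlib

open Set Filter Real

lemma sir_nonpos_deriv_le {f f' : ℝ → ℝ} {a b : ℝ} (hab : a ≤ b)
    (hd : ∀ t ∈ Set.Icc a b, HasDerivAt f (f' t) t)
    (h0 : ∀ t ∈ Set.Icc a b, f' t ≤ 0) : f b ≤ f a := by
  have hanti : AntitoneOn f (Set.Icc a b) := by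
    apply antitoneOn_of_deriv_nonpos (convex_Icc a b)
    · exact fun t ht => (hd t ht).continuousAt.continuousWithinAt
    · exact fun t ht => (hd t (interior_subset ht)).differentiableAt.differentiableWithinAt
    · intro t ht
      rw [(hd t (interior_subset ht)).deriv]
      exact h0 t (interior_subset ht)
  exact hanti (Set.left_mem_Icc.2 hab) (Set.right_mem_Icc.2 hab) hab

lemma sir_nonneg_deriv_le {f f' : ℝ → ℝ} {a b : ℝ} (hab : a ≤ b)
    (hd : ∀ t ∈ Set.Icc a b, HasDerivAt f (f' t) t)
    (h0 : ∀ t ∈ Set.Icc a b, 0 ≤ f' t) : f a ≤ f b := by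
  have := sir_nonpos_deriv_le (f := fun t => -f t) (f' := fun t => -f' t) hab
    (fun t ht => (hd t ht).neg) (fun t ht => neg_nonpos.2 (h0 t ht))
  simpa using this

lemma sir_key_compare {f f' : ℝ → ℝ} {c k a b : ℝ} (hk : 0 < k) (hab : a ≤ b)
    (hd : ∀ t ∈ Set.Icc a b, HasDerivAt f (f' t) t)
    (hle : ∀ t ∈ Set.Icc a b, f' t ≤ c - k * f t) :
    f b ≤ c / k + (f a - c / k) * Real.exp (-(k * (b - a))) := by
  set ψ : ℝ → ℝ := fun t => (f t - c / k) * Real.exp (k * t) with hψ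
  have hψd : ∀ t ∈ Set.Icc a b,
      HasDerivAt ψ ((f' t + k * f t - c) * Real.exp (k * t)) t := by
    intro t ht
    have h1 : HasDerivAt (fun t : ℝ => Real.exp (k * t)) (Real.exp (k * t) * k) t := by
      simpa using ((hasDerivAt_id t).const_mul k).exp
    have h2 := ((hd t ht).sub_const (c / k)).mul h1
    refine h2.congr_deriv ?_
    field_simp
    ring
  have hmono : ψ b ≤ ψ a := by
    apply sir_nonpos_deriv_le hab hψd
    intro t ht
    have h3 := hle t ht
    have h4 := (Real.exp_pos (k * t)).le
    have : f' t + k * f t - c ≤ 0 := by linarith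
    exact mul_nonpos_of_nonpos_of_nonneg this h4
  have heb := Real.exp_pos (k * b)
  have h4 : Real.exp (-(k * (b - a))) * Real.exp (k * b) = Real.exp (k * a) := by
    rw [← Real.exp_add]; ring_nf
  have h5 : (f b - c / k) * Real.exp (k * b)
      ≤ ((f a - c / k) * Real.exp (-(k * (b - a)))) * Real.exp (k * b) := by
    calc (f b - c / k) * Real.exp (k * b) = ψ b := rfl
      _ ≤ ψ a := hmono
      _ = (f a - c / k) * Real.exp (k * a) := rfl
      _ = ((f a - c / k) * Real.exp (-(k * (b - a)))) * Real.exp (k * b) := by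
          rw [mul_assoc, h4]
  have h6 := le_of_mul_le_mul_right h5 heb
  linarith

lemma sir_key_compare_ge {f f' : ℝ → ℝ} {c k a b : ℝ} (hk : 0 < k) (hab : a ≤ b)
    (hd : ∀ t ∈ Set.Icc a b, HasDerivAt f (f' t) t)
    (hle : ∀ t ∈ Set.Icc a b, c - k * f t ≤ f' t) :
    c / k + (f a - c / k) * Real.exp (-(k * (b - a))) ≤ f b := by
  have := sir_key_compare (f := fun t => -f t) (f' := fun t => -f' t) (c := -c) hk hab
    (fun t ht => (hd t ht).neg) (fun t ht => by have := hle t ht; simp; linarith)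
  simp only [neg_div] at this
  nlinarith [Real.exp_pos (-(k * (b - a)))]

lemma sir_log_compare {f f' g G : ℝ → ℝ} {a b : ℝ} (hab : a ≤ b)
    (hpos : ∀ t ∈ Set.Icc a b, 0 < f t)
    (hd : ∀ t ∈ Set.Icc a b, HasDerivAt f (f' t) t)
    (hG : ∀ t ∈ Set.Icc a b, HasDerivAt G (g t) t)
    (hle : ∀ t ∈ Set.Icc a b, f' t ≤ g t * f t) :
    f b ≤ f a * Real.exp (G b - G a) := by
  set φ : ℝ → ℝ := fun t => Real.log (f t) - G t with hφ
  have hφd : ∀ t ∈ Set.Icc a b, HasDerivAt φ (f' t / f t - g t) t := by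
    intro t ht
    exact ((hd t ht).log (hpos t ht).ne').sub (hG t ht)
  have h2 : φ b ≤ φ a := by
    apply sir_nonpos_deriv_le hab hφd
    intro t ht
    have h3 := hle t ht
    have h4 := hpos t ht
    have : f' t / f t ≤ g t := (div_le_iff₀ h4).2 h3
    linarith
  have ha : a ∈ Set.Icc a b := Set.left_mem_Icc.2 hab
  have hb : b ∈ Set.Icc a b := Set.right_mem_Icc.2 hab
  have h3 : Real.log (f b) ≤ Real.log (f a) + (G b - G a) := by
    have : Real.log (f b) - G b ≤ Real.log (f a) - G a := h2
    linarith
  calc f b = Real.exp (Real.log (f b)) := (Real.exp_log (hpos b hb)).symm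
    _ ≤ Real.exp (Real.log (f a) + (G b - G a)) := Real.exp_le_exp.2 h3
    _ = f a * Real.exp (G b - G a) := by rw [Real.exp_add, Real.exp_log (hpos a ha)]

lemma sir_exp_decay (M k T : ℝ) (hk : 0 < k) :
    Tendsto (fun t : ℝ => M * Real.exp (-(k * (t - T)))) atTop (nhds 0) := by
  have h1 : Tendsto (fun t : ℝ => -(k * (t - T))) atTop atBot := by
    apply Filter.tendsto_neg_atTop_atBot.comp
    apply Filter.Tendsto.const_mul_atTop hk
    exact tendsto_atTop_add_const_right atTop (-T) tendsto_id
  have h2 : Tendsto (fun t : ℝ => Real.exp (-(k * (t - T)))) atTop (nhds 0) :=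
    Real.tendsto_exp_atBot.comp h1
  simpa using h2.const_mul M

-- positivity for equations f' = A - f * r with A > 0 (the S equation)
lemma sir_S_type_pos {f r : ℝ → ℝ} {A : ℝ} (hA : 0 < A)
    (hd : ∀ t ≥ (0 : ℝ), HasDerivAt f (A - f t * r t) t) (h0 : 0 < f 0) :
    ∀ t ≥ (0 : ℝ), 0 < f t := by
  by_contra h
  push_neg at h
  obtain ⟨t₀, ht₀, hft₀⟩ := h
  have hcont : ContinuousOn f (Set.Icc 0 t₀) := fun t ht =>
    (hd t ht.1).continuousAt.continuousWithinAt
  have hivt : (0 : ℝ) ∈ f '' Set.Icc 0 t₀ := by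
    apply intermediate_value_Icc' ht₀ hcont
    exact ⟨hft₀, h0.le⟩
  set Z : Set ℝ := Set.Icc 0 t₀ ∩ f ⁻¹' {0} with hZ
  have hZne : Z.Nonempty := by
    obtain ⟨t, ht, hft⟩ := hivt
    exact ⟨t, ht, hft⟩
  have hZclosed : IsClosed Z :=
    hcont.preimage_isClosed_of_isClosed isClosed_Icc isClosed_singleton
  have hZbdd : BddBelow Z := ⟨0, fun t ht => ht.1.1⟩
  set s := sInf Z with hs
  have hsZ : s ∈ Z := hZclosed.csInf_mem hZne hZbdd
  have hs0 : 0 ≤ s := hsZ.1.1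
  have hfs : f s = 0 := hsZ.2
  have hspos : 0 < s := by
    rcases hs0.lt_or_eq with h | h
    · exact h
    · exfalso; rw [← h] at hfs; linarith
  have hposlt : ∀ t, 0 ≤ t → t < s → 0 < f t := by
    intro t ht hts
    by_contra hft
    push_neg at hft
    have hcont' : ContinuousOn f (Set.Icc 0 t) := fun u hu =>
      (hd u hu.1).continuousAt.continuousWithinAt
    have : (0:ℝ) ∈ f '' Set.Icc 0 t := intermediate_value_Icc' ht hcont' ⟨hft, h0.le⟩
    obtain ⟨u, hu, hfu⟩ := this
    have huZ : u ∈ Z := ⟨⟨hu.1, le_trans hu.2 (le_trans hts.le hsZ.1.2)⟩, hfu⟩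
    have := csInf_le hZbdd huZ
    have : u < s := lt_of_le_of_lt hu.2 hts
    linarith [csInf_le hZbdd huZ]
  -- derivative at s equals A, but left slopes are negative
  have hds : HasDerivAt f A s := by
    have h1 := hd s hs0
    rw [hfs] at h1
    simpa using h1
  have hW : HasDerivWithinAt f A (Set.Iio s) s := hds.hasDerivWithinAt
  have hslope : Tendsto (slope f s) (nhdsWithin s (Set.Iio s \ {s})) (nhds A) :=
    hasDerivWithinAt_iff_tendsto_slope.1 hW
  have hne : (Set.Iio s \ {s}) = Set.Iio s :=
    Set.diff_singleton_eq_self (by simp)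
  rw [hne] at hslope
  have : A ≤ 0 := by
    have hev : ∀ᶠ t in nhdsWithin s (Set.Iio s), slope f s t ≤ 0 := by
      have hmem : Set.Ioi (0:ℝ) ∈ nhdsWithin s (Set.Iio s) :=
        nhdsWithin_le_nhds (Ioi_mem_nhds hspos)
      filter_upwards [hmem, self_mem_nhdsWithin] with t ht ht'
      have h1 : 0 < f t := hposlt t (le_of_lt ht) ht'
      have h2 : t - s < 0 := sub_neg.2 ht'
      rw [slope_def_field, hfs, sub_zero]
      exact div_nonpos_of_nonneg_of_nonpos h1.le h2.le
    exact le_of_tendsto hslope hev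
  linarith

-- positivity for equations f' = c * f with c bounded below (the I equation)
lemma sir_I_type_pos {f c : ℝ → ℝ} {K : ℝ}
    (hd : ∀ t ≥ (0 : ℝ), HasDerivAt f (c t * f t) t)
    (hc : ∀ t ≥ (0 : ℝ), -K ≤ c t) (h0 : 0 < f 0) :
    ∀ t ≥ (0 : ℝ), 0 < f t := by
  by_contra h
  push_neg at h
  obtain ⟨t₀, ht₀, hft₀⟩ := h
  have hcont : ContinuousOn f (Set.Icc 0 t₀) := fun t ht =>
    (hd t ht.1).continuousAt.continuousWithinAt
  have hivt : (0 : ℝ) ∈ f '' Set.Icc 0 t₀ :=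
    intermediate_value_Icc' ht₀ hcont ⟨hft₀, h0.le⟩
  set Z : Set ℝ := Set.Icc 0 t₀ ∩ f ⁻¹' {0} with hZ
  have hZne : Z.Nonempty := by
    obtain ⟨t, ht, hft⟩ := hivt
    exact ⟨t, ht, hft⟩
  have hZclosed : IsClosed Z :=
    hcont.preimage_isClosed_of_isClosed isClosed_Icc isClosed_singleton
  have hZbdd : BddBelow Z := ⟨0, fun t ht => ht.1.1⟩
  set s := sInf Z with hs
  have hsZ : s ∈ Z := hZclosed.csInf_mem hZne hZbdd
  have hs0 : 0 ≤ s := hsZ.1.1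
  have hfs : f s = 0 := hsZ.2
  have hposlt : ∀ t, 0 ≤ t → t < s → 0 < f t := by
    intro t ht hts
    by_contra hft
    push_neg at hft
    have hcont' : ContinuousOn f (Set.Icc 0 t) := fun u hu =>
      (hd u hu.1).continuousAt.continuousWithinAt
    have : (0:ℝ) ∈ f '' Set.Icc 0 t := intermediate_value_Icc' ht hcont' ⟨hft, h0.le⟩
    obtain ⟨u, hu, hfu⟩ := this
    have huZ : u ∈ Z := ⟨⟨hu.1, le_trans hu.2 (le_trans hts.le hsZ.1.2)⟩, hfu⟩
    have h1 := csInf_le hZbdd huZ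
    have h2 : u < s := lt_of_le_of_lt hu.2 hts
    linarith
  have hfnonneg : ∀ t ∈ Set.Icc 0 s, 0 ≤ f t := by
    intro t ht
    rcases lt_or_eq_of_le ht.2 with h | h
    · exact (hposlt t ht.1 h).le
    · rw [h, hfs]
  -- g t = f t * exp (K t) is monotone on [0, s]
  set g : ℝ → ℝ := fun t => f t * Real.exp (K * t) with hg
  have hgd : ∀ t ∈ Set.Icc 0 s, HasDerivAt g ((c t + K) * f t * Real.exp (K * t)) t := by
    intro t ht
    have h1 : HasDerivAt (fun t : ℝ => Real.exp (K * t)) (Real.exp (K * t) * K) t := by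
      simpa using ((hasDerivAt_id t).const_mul K).exp
    have h2 := (hd t (le_trans ht.1 (le_refl t))).mul h1
    refine h2.congr_deriv ?_
    ring
  have hmono : g 0 ≤ g s := by
    apply sir_nonneg_deriv_le hs0 hgd
    intro t ht
    have h1 := hc t ht.1
    have h2 := hfnonneg t ht
    have h3 := (Real.exp_pos (K * t)).le
    have h4 : 0 ≤ c t + K := by linarith
    positivity
  have : g 0 = f 0 := by simp [hg]
  have : g s = 0 := by simp [hg, hfs]
  simp [hg, hfs] at hmono
  nlinarith [Real.exp_pos (K * 0)]


open Filter in
set_option maxHeartbeats 2000000 in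
/-- Suppose `R₀ ≤ 1`. Every solution of the planar SIR system with
`S(0) > 0`, `I(0) > 0` satisfies `S(t) → A/μ` and `I(t) → 0` as `t → ∞`: the disease-free
equilibrium `E₀ = (A/μ, 0)` is globally asymptotically stable in the open positive
quadrant. -/
theorem sir_global_stability_dfe (A β μ q : ℝ)
    (hA : 0 < A) (hβ : 0 < β) (hμ : 0 < μ) (hq : 0 < q)
    (R₀ : ℝ) (hR : R₀ = A * β / (μ * (q + μ))) (hR1 : R₀ ≤ 1)
    (S I : ℝ → ℝ)
    (hS : ∀ t ≥ (0 : ℝ), HasDerivAt S (A - β * S t * I t - μ * S t) t)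
    (hI : ∀ t ≥ (0 : ℝ), HasDerivAt I (β * S t * I t - (q + μ) * I t) t)
    (hS0 : 0 < S 0) (hI0 : 0 < I 0) :
    Tendsto S atTop (nhds (A / μ)) ∧ Tendsto I atTop (nhds 0) := by
  have hkey : A * β ≤ μ * (q + μ) := by
    have hden : 0 < μ * (q + μ) := by positivity
    rw [hR, div_le_one hden] at hR1
    exact hR1
  have hkey' : β * A / μ ≤ q + μ := by
    rw [div_le_iff₀ hμ]; nlinarith
  -- positivity of S
  have hSpos : ∀ t ≥ (0:ℝ), 0 < S t := by
    apply sir_S_type_pos (r := fun t => β * I t + μ) hA _ hS0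
    intro t ht
    have h1 := hS t ht
    have h2 : A - S t * (β * I t + μ) = A - β * S t * I t - μ * S t := by ring
    rw [h2]
    exact h1
  -- positivity of I
  have hIpos : ∀ t ≥ (0:ℝ), 0 < I t := by
    apply sir_I_type_pos (c := fun t => β * S t - (q + μ)) (K := q + μ) _ _ hI0
    · intro t ht
      have h1 := hI t ht
      have h2 : (β * S t - (q + μ)) * I t = β * S t * I t - (q + μ) * I t := by ring
      rw [h2]
      exact h1
    · intro t ht
      have := hSpos t ht
      show -(q + μ) ≤ β * S t - (q + μ)
      nlinarith
  obtain ⟨C, hC⟩ : ∃ x : ℝ, x = max (S 0 - A / μ) 0 := ⟨_, rfl⟩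
  have hC0 : 0 ≤ C := by rw [hC]; exact le_max_right _ _
  have hCge : S 0 - A / μ ≤ C := by rw [hC]; exact le_max_left _ _
  -- upper bound on S
  have hSub : ∀ t ≥ (0:ℝ), S t ≤ A / μ + C * Real.exp (-(μ * t)) := by
    intro t ht
    have hle : ∀ u ∈ Set.Icc 0 t, A - β * S u * I u - μ * S u ≤ A - μ * S u := by
      intro u hu
      have h2 := hSpos u hu.1
      have h3 := hIpos u hu.1
      nlinarith [mul_pos (mul_pos hβ h2) h3]
    have h1 := sir_key_compare (f := S) (f' := fun u => A - β * S u * I u - μ * S u)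
      (c := A) (k := μ) hμ ht (fun u hu => hS u hu.1) hle
    simp only [sub_zero] at h1
    have h5 : (S 0 - A / μ) * Real.exp (-(μ * t)) ≤ C * Real.exp (-(μ * t)) :=
      mul_le_mul_of_nonneg_right hCge (Real.exp_pos _).le
    linarith
  obtain ⟨M, hM⟩ : ∃ x : ℝ, x = A / μ + C := ⟨_, rfl⟩
  have hMpos : 0 < M := by
    rw [hM]
    have : 0 < A / μ := by positivity
    linarith
  have hSM : ∀ t ≥ (0:ℝ), S t ≤ M := by
    intro t ht
    have h1 := hSub t ht
    have h2 : Real.exp (-(μ * t)) ≤ 1 := Real.exp_le_one_iff.2 (by nlinarith)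
    have h3 : C * Real.exp (-(μ * t)) ≤ C := mul_le_of_le_one_right hC0 h2
    simp only [hM]
    linarith
  -- growth control on I
  have hIgrow : ∀ T ≥ (0:ℝ), ∀ t ≥ T,
      I t ≤ I T * Real.exp (β * C / μ * Real.exp (-(μ * T))) := by
    intro T hT t ht
    have h0T : ∀ u ∈ Set.Icc T t, (0:ℝ) ≤ u := fun u hu => le_trans hT hu.1
    have hGder : ∀ u ∈ Set.Icc T t,
        HasDerivAt (fun u => -(β * C / μ) * Real.exp (-(μ * u))) (β * C * Real.exp (-(μ * u))) u := by
      intro u _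
      have h2 : HasDerivAt (fun u : ℝ => Real.exp (-(μ * u))) (Real.exp (-(μ * u)) * (-μ)) u := by
        have := ((hasDerivAt_id u).const_mul (-μ)).exp
        simpa [neg_mul] using this
      have h3 := h2.const_mul (-(β * C / μ))
      refine h3.congr_deriv ?_
      rw [mul_neg, neg_mul_neg, mul_comm (Real.exp _) μ, ← mul_assoc, div_mul_cancel₀ _ hμ.ne']
    have hle : ∀ u ∈ Set.Icc T t, β * S u * I u - (q + μ) * I u
        ≤ β * C * Real.exp (-(μ * u)) * I u := by
      intro u hu
      have h2 := hSpos u (h0T u hu)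
      have h3 := hIpos u (h0T u hu)
      have h4 := hSub u (h0T u hu)
      have h5 : β * S u - (q + μ) ≤ β * C * Real.exp (-(μ * u)) := by
        have h5a : β * S u ≤ β * (A / μ + C * Real.exp (-(μ * u))) :=
          mul_le_mul_of_nonneg_left h4 hβ.le
        have h5b : β * (A / μ + C * Real.exp (-(μ * u)))
            = β * A / μ + β * C * Real.exp (-(μ * u)) := by ring
        linarith
      nlinarith [mul_le_mul_of_nonneg_right h5 h3.le]
    have h1 := sir_log_compare (f := I) (f' := fun u => β * S u * I u - (q + μ) * I u)
      (g := fun u => β * C * Real.exp (-(μ * u)))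
      (G := fun u => -(β * C / μ) * Real.exp (-(μ * u))) ht
      (fun u hu => hIpos u (h0T u hu))
      (fun u hu => hI u (h0T u hu)) hGder hle
    have hGd : -(β * C / μ) * Real.exp (-(μ * t)) - -(β * C / μ) * Real.exp (-(μ * T))
        ≤ β * C / μ * Real.exp (-(μ * T)) := by
      have h6 := (Real.exp_pos (-(μ * t))).le
      have hbc : 0 ≤ β * C / μ := by positivity
      nlinarith
    calc I t ≤ I T * Real.exp (-(β * C / μ) * Real.exp (-(μ * t)) -
          -(β * C / μ) * Real.exp (-(μ * T))) := h1
      _ ≤ I T * Real.exp (β * C / μ * Real.exp (-(μ * T))) :=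
          mul_le_mul_of_nonneg_left (Real.exp_le_exp.2 hGd) (hIpos T hT).le
  obtain ⟨Mi, hMi⟩ : ∃ x : ℝ, x = I 0 * Real.exp (β * C / μ) := ⟨_, rfl⟩
  have hIM : ∀ t ≥ (0:ℝ), I t ≤ Mi := by
    intro t ht
    have h1 := hIgrow 0 le_rfl t ht
    rw [hMi]
    simpa using h1
  -- I gets below any δ infinitely often
  have hInf : ∀ δ > (0:ℝ), ∀ T ≥ (0:ℝ), ∃ t ≥ T, I t < δ := by
    intro δ hδ T hT
    by_contra h
    push_neg at h
    obtain ⟨k, hk⟩ : ∃ x : ℝ, x = μ + β * δ := ⟨_, rfl⟩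
    have hkpos : 0 < k := by rw [hk]; positivity
    have hAk : A / k < A / μ := by
      apply div_lt_div_of_pos_left hA hμ
      rw [hk]
      nlinarith
    obtain ⟨ε, hε⟩ : ∃ x : ℝ, x = (A / μ - A / k) / 2 := ⟨_, rfl⟩
    have hεpos : 0 < ε := by simp only [hε]; linarith
    -- S eventually below A/μ - ε
    have hSb : ∀ t ≥ T, S t ≤ A / k + M * Real.exp (-(k * (t - T))) := by
      intro t ht
      have hle : ∀ u ∈ Set.Icc T t, A - β * S u * I u - μ * S u ≤ A - k * S u := by
        intro u hu
        have h2 := hSpos u (le_trans hT hu.1)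
        have h3 := h u hu.1
        simp only [hk]
        nlinarith [mul_le_mul_of_nonneg_left h3 (by positivity : (0:ℝ) ≤ β * S u)]
      have h1 := sir_key_compare (f := S) (f' := fun u => A - β * S u * I u - μ * S u)
        (c := A) (k := k) hkpos ht (fun u hu => hS u (le_trans hT hu.1)) hle
      have h4 : S T - A / k ≤ M := by
        have := hSM T hT
        have h5 : 0 < A / k := div_pos hA hkpos
        linarith
      nlinarith [Real.exp_pos (-(k * (t - T))), h1]
    obtain ⟨N, hN⟩ := eventually_atTop.1
      ((sir_exp_decay M k T hkpos).eventually_lt_const hεpos)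
    obtain ⟨T', hT'⟩ : ∃ x : ℝ, x = max N T := ⟨_, rfl⟩
    have hT'T : T ≤ T' := by rw [hT']; exact le_max_right _ _
    have hT'0 : (0:ℝ) ≤ T' := le_trans hT hT'T
    have hSb' : ∀ t ≥ T', S t ≤ A / μ - ε := by
      intro t ht
      have h1 := hSb t (le_trans hT'T ht)
      have h2 := hN t (le_trans (by rw [hT']; exact le_max_left _ _ : N ≤ T') ht)
      have h3 : A / k + ε = A / μ - ε := by simp only [hε]; ring
      linarith
    -- I decays exponentially after T'
    have hId : ∀ t ≥ T', I t ≤ Mi * Real.exp (-(β * ε * (t - T'))) := by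
      intro t ht
      have hbε : 0 < β * ε := mul_pos hβ hεpos
      have hle : ∀ u ∈ Set.Icc T' t, β * S u * I u - (q + μ) * I u ≤ 0 - β * ε * I u := by
        intro u hu
        have h2 := hSpos u (le_trans hT'0 hu.1)
        have h3 := hIpos u (le_trans hT'0 hu.1)
        have h4 := hSb' u hu.1
        have h5a : β * S u ≤ β * (A / μ - ε) := mul_le_mul_of_nonneg_left h4 hβ.le
        have h5b : β * (A / μ - ε) = β * A / μ - β * ε := by ring
        have h6 : β * S u - (q + μ) ≤ -(β * ε) := by linarith
        nlinarith [mul_le_mul_of_nonneg_right h6 h3.le]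
      have h1 := sir_key_compare (f := I) (f' := fun u => β * S u * I u - (q + μ) * I u)
        (c := 0) (k := β * ε) hbε ht (fun u hu => hI u (le_trans hT'0 hu.1)) hle
      simp only [zero_div, zero_add, sub_zero] at h1
      have h5 := hIM T' hT'0
      nlinarith [Real.exp_pos (-(β * ε * (t - T'))), hIpos T' hT'0]
    obtain ⟨N', hN'⟩ := eventually_atTop.1
      ((sir_exp_decay Mi (β * ε) T' (mul_pos hβ hεpos)).eventually_lt_const hδ)
    obtain ⟨t₁, ht₁⟩ : ∃ x : ℝ, x = max N' T' := ⟨_, rfl⟩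
    have h1 := hId t₁ (by rw [ht₁]; exact le_max_right _ _)
    have h2 := hN' t₁ (by rw [ht₁]; exact le_max_left _ _)
    have h3 := h t₁ (le_trans hT'T (by rw [ht₁]; exact le_max_right _ _))
    linarith
  -- I tends to 0
  have hIlim : Tendsto I atTop (nhds 0) := by
    rw [Metric.tendsto_atTop]
    intro ε hε
    have hlog2 : (0:ℝ) < Real.log 2 := Real.log_pos (by norm_num)
    have hdec : Tendsto (fun T : ℝ => β * C / μ * Real.exp (-(μ * T))) atTop (nhds 0) := by
      have := sir_exp_decay (β * C / μ) μ 0 hμ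
      simpa using this
    obtain ⟨N₀, hN₀⟩ := eventually_atTop.1 (hdec.eventually_lt_const hlog2)
    obtain ⟨T, hTN₀, hTI⟩ := hInf (ε / 2) (by linarith) (max N₀ 0) (le_max_right _ _)
    refine ⟨T, fun t ht => ?_⟩
    have hT0 : (0:ℝ) ≤ T := le_trans (le_max_right _ _) hTN₀
    have h1 := hIgrow T hT0 t ht
    have h2 : Real.exp (β * C / μ * Real.exp (-(μ * T))) ≤ 2 := by
      have h3 := (hN₀ T (le_trans (le_max_left _ _) hTN₀)).le
      calc Real.exp (β * C / μ * Real.exp (-(μ * T))) ≤ Real.exp (Real.log 2) :=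
            Real.exp_le_exp.2 h3
        _ = 2 := Real.exp_log (by norm_num)
    have h4 := hIpos t (le_trans hT0 ht)
    have h5 := hIpos T hT0
    have h6 : I t < ε := by
      calc I t ≤ I T * Real.exp (β * C / μ * Real.exp (-(μ * T))) := h1
        _ ≤ I T * 2 := by nlinarith
        _ < ε := by linarith
    rw [Real.dist_eq, sub_zero, abs_of_pos h4]
    exact h6
  -- S tends to A/μ
  have hSlim : Tendsto S atTop (nhds (A / μ)) := by
    rw [Metric.tendsto_atTop]
    intro ε hε
    obtain ⟨d, hd⟩ : ∃ x : ℝ, x = μ * ε / (4 * (β * M + 1)) := ⟨_, rfl⟩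
    have hdpos : 0 < d := by
      rw [hd]
      exact div_pos (mul_pos hμ hε) (by nlinarith [mul_pos hβ hMpos])
    obtain ⟨T₁, hT₁⟩ := Metric.tendsto_atTop.1 hIlim d hdpos
    obtain ⟨T₁', hT₁'⟩ : ∃ x : ℝ, x = max T₁ 0 := ⟨_, rfl⟩
    have hT₁'0 : (0:ℝ) ≤ T₁' := by rw [hT₁']; exact le_max_right _ _
    obtain ⟨c, hc⟩ : ∃ x : ℝ, x = A - μ * ε / 4 := ⟨_, rfl⟩
    have hlow : ∀ t ≥ T₁', c / μ + (S T₁' - c / μ) * Real.exp (-(μ * (t - T₁'))) ≤ S t := by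
      intro t ht
      apply sir_key_compare_ge (f' := fun u => A - β * S u * I u - μ * S u) hμ ht
        (fun u hu => hS u (le_trans hT₁'0 hu.1))
      intro u hu
      have h2 := hSpos u (le_trans hT₁'0 hu.1)
      have h3 := hIpos u (le_trans hT₁'0 hu.1)
      have h4 := hSM u (le_trans hT₁'0 hu.1)
      have h5 := hT₁ u (le_trans (by rw [hT₁']; exact le_max_left _ _ : T₁ ≤ T₁') hu.1)
      rw [Real.dist_eq, sub_zero, abs_of_pos h3] at h5
      have h6 : β * S u * I u ≤ μ * ε / 4 := by
        have h7 : β * S u * I u ≤ β * M * I u :=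
          mul_le_mul_of_nonneg_right (mul_le_mul_of_nonneg_left h4 hβ.le) h3.le
        have h8 : β * M * I u ≤ (β * M + 1) * I u := by nlinarith
        have hbm0 : 0 < β * M + 1 := by nlinarith [mul_pos hβ hMpos]
        have h9 : (β * M + 1) * I u < (β * M + 1) * d := by
          exact mul_lt_mul_of_pos_left h5 hbm0
        have h10 : (β * M + 1) * d = μ * ε / 4 := by
          have hbm : β * M + 1 ≠ 0 := by nlinarith [mul_pos hβ hMpos]
          rw [hd]
          field_simp
        linarith
      simp only [hc]
      linarith
    obtain ⟨D, hD⟩ : ∃ x : ℝ, x = max (c / μ) 0 := ⟨_, rfl⟩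
    have hD0 : 0 ≤ D := by rw [hD]; exact le_max_right _ _
    have hlow' : ∀ t ≥ T₁', A / μ - ε / 4 - D * Real.exp (-(μ * (t - T₁'))) ≤ S t := by
      intro t ht
      have h1 := hlow t ht
      have h2 : S T₁' - c / μ ≥ -D := by
        have h3 := hSpos T₁' hT₁'0
        have h4 : c / μ ≤ D := by rw [hD]; exact le_max_left _ _
        linarith
      have h5 : (S T₁' - c / μ) * Real.exp (-(μ * (t - T₁')))
          ≥ -D * Real.exp (-(μ * (t - T₁'))) :=
        mul_le_mul_of_nonneg_right h2 (Real.exp_pos _).le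
      have h6 : c / μ = A / μ - ε / 4 := by
        rw [hc, sub_div, mul_div_assoc, mul_div_cancel_left₀ _ hμ.ne']
      linarith
    obtain ⟨N₃, hN₃⟩ := eventually_atTop.1
      ((sir_exp_decay D μ T₁' hμ).eventually_lt_const (by linarith : (0:ℝ) < ε / 4))
    have hupper : Tendsto (fun t : ℝ => C * Real.exp (-(μ * t))) atTop (nhds 0) := by
      have := sir_exp_decay C μ 0 hμ
      simpa using this
    obtain ⟨N₂, hN₂⟩ := eventually_atTop.1
      (hupper.eventually_lt_const (by linarith : (0:ℝ) < ε / 2))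
    refine ⟨max (max T₁' N₂) N₃, fun t ht => ?_⟩
    have ht1 : T₁' ≤ t := le_trans (le_trans (le_max_left _ _) (le_max_left _ _)) ht
    have ht2 : N₂ ≤ t := le_trans (le_trans (le_max_right _ _) (le_max_left _ _)) ht
    have ht3 : N₃ ≤ t := le_trans (le_max_right _ _) ht
    have ht0 : (0:ℝ) ≤ t := le_trans hT₁'0 ht1
    have hup := hSub t ht0
    have h1 := hN₂ t ht2
    have h2 := hlow' t ht1
    have h3 := hN₃ t ht3
    rw [Real.dist_eq, abs_lt]
    constructor <;> linarith
  exact ⟨hSlim, hIlim⟩
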